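/- (1−zw)·e^{−z(1−w)} ⊙_z Set^(z,w) = [Set^(−z,w) + z·(w/(1−w))·(d/dz)Set^(−z,w)] evaluated at z ↦ (1−w)z, where Set^(z,w) = Σ_{n≥0} zⁿ/(n!·(1+w)^{C(n,2)}) and ⊙_z is the exponential Hadamard product in z. -/

import Mathlib

open PowerSeries

noncomputable abbrev K := RatFunc ℚ

/-- The exponential Hadamard product in `z`. -/
noncomputable def expHadamard (A B : PowerSeries K) : PowerSeries K :=
  PowerSeries.mk fun n => (coeff n A) * (coeff n B) * (n.factorial : K)

/-- `Set^(z,w) = Σ_{n≥0} zⁿ/(n!·(1+w)^{C(n,2)})`. -/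
noncomputable def setGGF : PowerSeries K :=
  PowerSeries.mk fun n => ((1 + RatFunc.X) ^ (n.choose 2) * (n.factorial : K))⁻¹

lemma one_sub_X_ne : (1 : K) - RatFunc.X ≠ 0 := by
  intro h
  have h0 : algebraMap (Polynomial ℚ) K (1 - Polynomial.X) = algebraMap (Polynomial ℚ) K 0 := by
    simpa [map_sub] using h
  have h1 := RatFunc.algebraMap_injective ℚ h0
  have := congrArg (fun p => Polynomial.coeff p 1) h1
  simp [Polynomial.coeff_one] at this

lemma one_add_X_ne : (1 : K) + RatFunc.X ≠ 0 := by
  intro h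
  have h0 : algebraMap (Polynomial ℚ) K (1 + Polynomial.X) = algebraMap (Polynomial ℚ) K 0 := by
    simpa [map_add] using h
  have h1 := RatFunc.algebraMap_injective ℚ h0
  have := congrArg (fun p => Polynomial.coeff p 1) h1
  simp [Polynomial.coeff_one] at this

/-- `(1−zw)·e^{−z(1−w)} ⊙_z Set^(z,w)
  = [Set^(−z,w) + z·(w/(1−w))·(d/dz)Set^(−z,w)]` at `z ↦ (1−w)z`. -/
theorem hadamard_elem_setGGF :
    expHadamard
        ((1 - PowerSeries.C RatFunc.X * X) * rescale (RatFunc.X - 1) (exp K))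
        setGGF =
      rescale (1 - RatFunc.X)
        (rescale (-1) setGGF +
          PowerSeries.C (RatFunc.X / (1 - RatFunc.X)) *
            (X * derivativeFun (rescale (-1) setGGF))) := by
  ext n
  rw [show (1 - PowerSeries.C RatFunc.X * X) * rescale (RatFunc.X - 1) (exp K)
      = rescale (RatFunc.X - 1) (exp K)
        - PowerSeries.C RatFunc.X * (X * rescale (RatFunc.X - 1) (exp K)) from by ring]
  simp only [expHadamard, setGGF, coeff_mk, map_sub, map_add, coeff_C_mul, coeff_rescale,
    coeff_exp, map_add]
  cases n with
  | zero => simp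
  | succ m =>
    simp only [coeff_succ_X_mul, derivativeFun, Derivation.toFun_eq_coe, coeff_derivativeFun, coeff_rescale, coeff_mk, coeff_exp]
    haveI : CharZero K := charZero_of_injective_algebraMap (algebraMap ℚ K).injective
    rw [show RatFunc.X - 1 = -(1 - RatFunc.X) by ring, neg_pow (1 - RatFunc.X) (m+1), neg_pow (1 - RatFunc.X) m]
    simp only [map_div₀, map_one, map_natCast]
    have hf2 : ((m).factorial : K) ≠ 0 := Nat.cast_ne_zero.mpr (Nat.factorial_ne_zero _)
    have hp : ((1 : K) + RatFunc.X) ^ (m + 1).choose 2 ≠ 0 := pow_ne_zero _ one_add_X_ne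
    have hm1 : ((m : K) + 1) ≠ 0 := Nat.cast_add_one_ne_zero m
    have hfs : (((m + 1).factorial : K)) = ((m : K) + 1) * (m.factorial : K) := by
      push_cast [Nat.factorial_succ]; ring
    rw [hfs, pow_succ ((-1 : K)), pow_succ ((1 : K) - RatFunc.X)]
    generalize ((1 : K) - RatFunc.X) ^ m = P
    generalize ((-1 : K)) ^ m = E
    generalize ((1 : K) + RatFunc.X) ^ (m + 1).choose 2 = Q at hp
    simp only [one_div, div_eq_mul_inv]
    have hv : ((((m : K) + 1) * (m.factorial : K)))⁻¹ * (((m : K) + 1) * (m.factorial : K)) = 1 :=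
      inv_mul_cancel₀ (mul_ne_zero hm1 hf2)
    have hw : ((m.factorial : K))⁻¹ * (m.factorial : K) = 1 := inv_mul_cancel₀ hf2
    have hs : ((1 : K) - RatFunc.X)⁻¹ * ((1 : K) - RatFunc.X) = 1 := inv_mul_cancel₀ one_sub_X_ne
    set u : K := (Q * (((m : K) + 1) * (m.factorial : K)))⁻¹ with hu
    linear_combination (-(E * P * (1 - RatFunc.X) * u)) * hv +
      (-(RatFunc.X * E * P * u * ((m : K) + 1))) * hw +
      (RatFunc.X * E * P * u * ((m : K) + 1)) * hs
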